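/- For octonions x, a with |x̄ a| < 1, the identity D̄_x[(x - a|x|²)/|1 - x̄a|⁸] = [6(1 - |a|²|x|²) + 2(1 - x̄a)](1 - x̄a)/|1 - x̄a|^{10} holds, where D̄_x = Σ_{i=0}^7 ē_i ∂/∂x_i. -/

import Mathlib

noncomputable section
open MeasureTheory Metric
open scoped Quaternion

/-- The octonions, via the Cayley–Dickson construction on the quaternions,
carrying the Euclidean (`L²`) norm. -/
abbrev Octonion : Type := WithLp 2 (ℍ[ℝ] × ℍ[ℝ])

namespace Octonion

def mk (a b : ℍ[ℝ]) : Octonion := (WithLp.equiv 2 (ℍ[ℝ] × ℍ[ℝ])).symm (a, b)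
def p1 (x : Octonion) : ℍ[ℝ] := (WithLp.equiv 2 (ℍ[ℝ] × ℍ[ℝ]) x).1
def p2 (x : Octonion) : ℍ[ℝ] := (WithLp.equiv 2 (ℍ[ℝ] × ℍ[ℝ]) x).2

instance : One Octonion := ⟨mk 1 0⟩
/-- Cayley–Dickson multiplication: `(a,b)(c,d) = (ac - d̄b, da + bc̄)`. -/
instance : Mul Octonion :=
  ⟨fun x y => mk (p1 x * p1 y - star (p2 y) * p2 x) (p2 y * p1 x + p2 x * star (p1 y))⟩

/-- Octonionic conjugation. -/
def conj (x : Octonion) : Octonion := mk (star (p1 x)) (-(p2 x))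

/-- The standard basis `e₀ = 1, e₁, …, e₇` of the octonions. -/
def e : Fin 8 → Octonion
  | 0 => mk 1 0
  | 1 => mk ⟨0,1,0,0⟩ 0
  | 2 => mk ⟨0,0,1,0⟩ 0
  | 3 => mk ⟨0,0,0,1⟩ 0
  | 4 => mk 0 1
  | 5 => mk 0 ⟨0,1,0,0⟩
  | 6 => mk 0 ⟨0,0,1,0⟩
  | 7 => mk 0 ⟨0,0,0,1⟩

/-- The real coordinates of an octonion w.r.t. the basis `e`. -/
def coord (i : Fin 8) (x : Octonion) : ℝ :=
  match i with
  | 0 => (p1 x).re | 1 => (p1 x).imI | 2 => (p1 x).imJ | 3 => (p1 x).imK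
  | 4 => (p2 x).re | 5 => (p2 x).imI | 6 => (p2 x).imJ | 7 => (p2 x).imK

/-- Partial derivative in the direction `e i`. -/
def pd (i : Fin 8) (f : Octonion → Octonion) (x : Octonion) : Octonion :=
  fderiv ℝ f x (e i)

/-- The generalized Cauchy–Riemann operator `Df = ∑ eᵢ ∂f/∂xᵢ`. -/
def D (f : Octonion → Octonion) (x : Octonion) : Octonion := ∑ i, e i * pd i f x

/-- The right-acting Cauchy–Riemann operator `fD = ∑ (∂f/∂xᵢ) eᵢ`. -/
def Dright (f : Octonion → Octonion) (x : Octonion) : Octonion := ∑ i, pd i f x * e i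

/-- The conjugate Cauchy–Riemann operator `D̄f = ∑ ēᵢ ∂f/∂xᵢ`. -/
def Dbar (f : Octonion → Octonion) (x : Octonion) : Octonion := ∑ i, conj (e i) * pd i f x

/-- The Laplacian `Δf = ∑ ∂²f/∂xᵢ²`. -/
def lap (f : Octonion → Octonion) (x : Octonion) : Octonion :=
  ∑ i, fderiv ℝ (fun y => fderiv ℝ f y (e i)) x (e i)

instance : MeasurableSpace Octonion := borel _
instance : BorelSpace Octonion := ⟨rfl⟩
instance : MeasureSpace Octonion := ⟨Measure.addHaar⟩

/-- The surface measure on the unit sphere `S⁷`. -/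
def sphereMeasure : Measure (sphere (0 : Octonion) 1) := (volume : Measure Octonion).toSphere

/-- `ω₈`, the surface area of the unit sphere in `ℝ⁸`. -/
def ω : ℝ := (sphereMeasure Set.univ).toReal

end Octonion


set_option maxHeartbeats 1000000

namespace Octonion

lemma oext {x y : Octonion} (h1 : p1 x = p1 y) (h2 : p2 x = p2 y) : x = y := by
  have : (p1 x, p2 x) = (p1 y, p2 y) := by rw [h1, h2]
  exact (WithLp.equiv 2 (ℍ[ℝ] × ℍ[ℝ])).injective this
@[simp] lemma p1_mk (a b : ℍ[ℝ]) : p1 (mk a b) = a := rfl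
@[simp] lemma p2_mk (a b : ℍ[ℝ]) : p2 (mk a b) = b := rfl
@[simp] lemma p1_add (x y : Octonion) : p1 (x + y) = p1 x + p1 y := rfl
@[simp] lemma p2_add (x y : Octonion) : p2 (x + y) = p2 x + p2 y := rfl
@[simp] lemma p1_sub (x y : Octonion) : p1 (x - y) = p1 x - p1 y := rfl
@[simp] lemma p2_sub (x y : Octonion) : p2 (x - y) = p2 x - p2 y := rfl
@[simp] lemma p1_neg (x : Octonion) : p1 (-x) = -p1 x := rfl
@[simp] lemma p2_neg (x : Octonion) : p2 (-x) = -p2 x := rfl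
@[simp] lemma p1_smul (r : ℝ) (x : Octonion) : p1 (r • x) = r • p1 x := rfl
@[simp] lemma p2_smul (r : ℝ) (x : Octonion) : p2 (r • x) = r • p2 x := rfl
@[simp] lemma p1_one : p1 (1 : Octonion) = 1 := rfl
@[simp] lemma p2_one : p2 (1 : Octonion) = 0 := rfl
@[simp] lemma p1_zero : p1 (0 : Octonion) = 0 := rfl
@[simp] lemma p2_zero : p2 (0 : Octonion) = 0 := rfl
@[simp] lemma p1_mul (x y : Octonion) : p1 (x * y) = p1 x * p1 y - star (p2 y) * p2 x := rfl
@[simp] lemma p2_mul (x y : Octonion) : p2 (x * y) = p2 y * p1 x + p2 x * star (p1 y) := rfl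
@[simp] lemma p1_conj (x : Octonion) : p1 (conj x) = star (p1 x) := rfl
@[simp] lemma p2_conj (x : Octonion) : p2 (conj x) = -(p2 x) := rfl

lemma add_mul' (x y z : Octonion) : (x + y) * z = x * z + y * z := by
  apply oext <;> simp <;> noncomm_ring
lemma mul_add' (x y z : Octonion) : x * (y + z) = x * y + x * z := by
  apply oext <;> simp <;> noncomm_ring
lemma sub_mul' (x y z : Octonion) : (x - y) * z = x * z - y * z := by
  apply oext <;> (simp; try noncomm_ring)
lemma mul_sub' (x y z : Octonion) : x * (y - z) = x * y - x * z := by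
  apply oext <;> (simp; try noncomm_ring)
lemma smul_mul' (r : ℝ) (x z : Octonion) : (r • x) * z = r • (x * z) := by
  apply oext <;> (simp; try ext) <;> (simp; try ring)
lemma mul_smul'' (r : ℝ) (x z : Octonion) : x * (r • z) = r • (x * z) := by
  apply oext <;> (simp; try ext) <;> (simp; try ring)
lemma one_mul' (x : Octonion) : (1:Octonion) * x = x := by
  apply oext <;> simp
lemma mul_one' (x : Octonion) : x * (1:Octonion) = x := by
  apply oext <;> simp
lemma conj_add (x y : Octonion) : conj (x + y) = conj x + conj y := by
  apply oext <;> simp <;> abel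
lemma conj_smul (r : ℝ) (x : Octonion) : conj (r • x) = r • conj x := by
  apply oext <;> simp

def qi : ℍ[ℝ] := ⟨0,1,0,0⟩
def qj : ℍ[ℝ] := ⟨0,0,1,0⟩
def qk : ℍ[ℝ] := ⟨0,0,0,1⟩
@[simp] lemma qi_re : qi.re = 0 := rfl
@[simp] lemma qi_imI : qi.imI = 1 := rfl
@[simp] lemma qi_imJ : qi.imJ = 0 := rfl
@[simp] lemma qi_imK : qi.imK = 0 := rfl
@[simp] lemma qj_re : qj.re = 0 := rfl
@[simp] lemma qj_imI : qj.imI = 0 := rfl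
@[simp] lemma qj_imJ : qj.imJ = 1 := rfl
@[simp] lemma qj_imK : qj.imK = 0 := rfl
@[simp] lemma qk_re : qk.re = 0 := rfl
@[simp] lemma qk_imI : qk.imI = 0 := rfl
@[simp] lemma qk_imJ : qk.imJ = 0 := rfl
@[simp] lemma qk_imK : qk.imK = 1 := rfl
@[simp] lemma e0 : e 0 = mk 1 0 := rfl
@[simp] lemma e1 : e 1 = mk qi 0 := rfl
@[simp] lemma e2 : e 2 = mk qj 0 := rfl
@[simp] lemma e3 : e 3 = mk qk 0 := rfl
@[simp] lemma e4 : e 4 = mk 0 1 := rfl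
@[simp] lemma e5 : e 5 = mk 0 qi := rfl
@[simp] lemma e6 : e 6 = mk 0 qj := rfl
@[simp] lemma e7 : e 7 = mk 0 qk := rfl

lemma qinner (a b : ℍ[ℝ]) : (inner ℝ a b : ℝ) = (a * star b).re := rfl
lemma oinner (x y : Octonion) : (inner ℝ x y : ℝ) = inner ℝ (p1 x) (p1 y) + inner ℝ (p2 x) (p2 y) := by
  rw [WithLp.prod_inner_apply]; rfl

set_option maxRecDepth 10000 in
lemma sumA (x a : Octonion) :
    ∑ i, conj (e i) * (e i - ((2:ℝ) * (inner ℝ x (e i) : ℝ)) • a)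
      = (8:ℝ) • (1:Octonion) - (2:ℝ) • (conj x * a) := by
  apply oext <;>
    (simp only [Fin.sum_univ_eight, e0, e1, e2, e3, e4, e5, e6, e7, oinner, qinner,
      p1_add, p2_add, p1_sub, p2_sub, p1_smul, p2_smul, p1_mul, p2_mul, p1_conj, p2_conj,
      p1_one, p2_one, p1_mk, p2_mk]; try ext) <;>
    (simp [Quaternion.re_mul, Quaternion.imI_mul, Quaternion.imJ_mul, Quaternion.imK_mul]; try ring)

set_option maxRecDepth 10000 in
lemma sumB (c h a : Octonion) :
    ∑ i, (inner ℝ c (conj (e i) * a) : ℝ) • (conj (e i) * h) = (c * conj a) * h := by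
  apply oext <;>
    (simp only [Fin.sum_univ_eight, e0, e1, e2, e3, e4, e5, e6, e7, oinner, qinner,
      p1_add, p2_add, p1_sub, p2_sub, p1_smul, p2_smul, p1_mul, p2_mul, p1_conj, p2_conj,
      p1_one, p2_one, p1_mk, p2_mk]; try ext) <;>
    (simp [Quaternion.re_mul, Quaternion.imI_mul, Quaternion.imJ_mul, Quaternion.imK_mul]; try ring)

lemma mulC (z a : Octonion) : (z * a) * conj a = (inner ℝ a a : ℝ) • z := by
  apply oext <;>
    (simp only [oinner, qinner,
      p1_add, p2_add, p1_sub, p2_sub, p1_smul, p2_smul, p1_mul, p2_mul, p1_conj, p2_conj,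
      p1_one, p2_one, p1_mk, p2_mk]; try ext) <;>
    (simp [Quaternion.re_mul, Quaternion.imI_mul, Quaternion.imJ_mul, Quaternion.imK_mul]; try ring)

lemma mulD (a : Octonion) : conj a * a = (inner ℝ a a : ℝ) • (1:Octonion) := by
  apply oext <;>
    (simp only [oinner, qinner,
      p1_add, p2_add, p1_sub, p2_sub, p1_smul, p2_smul, p1_mul, p2_mul, p1_conj, p2_conj,
      p1_one, p2_one, p1_mk, p2_mk]; try ext) <;>
    (simp [Quaternion.re_mul, Quaternion.imI_mul, Quaternion.imJ_mul, Quaternion.imK_mul]; try ring)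

lemma mulE (a x : Octonion) :
    conj a * x = ((2:ℝ) * (inner ℝ x a : ℝ)) • (1:Octonion) - conj x * a := by
  apply oext <;>
    (simp only [oinner, qinner,
      p1_add, p2_add, p1_sub, p2_sub, p1_smul, p2_smul, p1_mul, p2_mul, p1_conj, p2_conj,
      p1_one, p2_one, p1_mk, p2_mk]; try ext) <;>
    (simp [Quaternion.re_mul, Quaternion.imI_mul, Quaternion.imJ_mul, Quaternion.imK_mul]; try ring)

lemma sqO (z : Octonion) :
    z * z = ((2:ℝ) * (p1 z).re) • z - (inner ℝ z z : ℝ) • (1:Octonion) := by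
  apply oext <;>
    (simp only [oinner, qinner,
      p1_add, p2_add, p1_sub, p2_sub, p1_smul, p2_smul, p1_mul, p2_mul, p1_conj, p2_conj,
      p1_one, p2_one, p1_mk, p2_mk]; try ext) <;>
    (simp [Quaternion.re_mul, Quaternion.imI_mul, Quaternion.imJ_mul, Quaternion.imK_mul]; try ring)

lemma compI (x a : Octonion) :
    (inner ℝ (conj x * a) (conj x * a) : ℝ) = (inner ℝ x x : ℝ) * (inner ℝ a a : ℝ) := by
  simp only [oinner, qinner, p1_mul, p2_mul, p1_conj, p2_conj, p1_one, p2_one, p1_mk, p2_mk]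
  simp [Quaternion.re_mul, Quaternion.imI_mul, Quaternion.imJ_mul, Quaternion.imK_mul]; ring

lemma reP (x a : Octonion) : (p1 (conj x * a)).re = (inner ℝ x a : ℝ) := by
  simp only [oinner, qinner, p1_mul, p2_mul, p1_conj, p2_conj, p1_one, p2_one, p1_mk, p2_mk]
  simp [Quaternion.re_mul, Quaternion.imI_mul, Quaternion.imJ_mul, Quaternion.imK_mul]; ring

lemma qval (x a : Octonion) :
    (inner ℝ ((1:Octonion) - conj x * a) ((1:Octonion) - conj x * a) : ℝ)
      = 1 - 2 * (inner ℝ x a : ℝ) + (inner ℝ x x : ℝ) * (inner ℝ a a : ℝ) := by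
  simp only [oinner, qinner, p1_sub, p2_sub, p1_mul, p2_mul, p1_conj, p2_conj, p1_one, p2_one,
    p1_mk, p2_mk]
  simp [Quaternion.re_mul, Quaternion.imI_mul, Quaternion.imJ_mul, Quaternion.imK_mul]; ring

lemma innerOne (x a : Octonion) :
    (inner ℝ (1:Octonion) (conj x * a) : ℝ) = (inner ℝ x a : ℝ) := by
  simp only [oinner, qinner, p1_mul, p2_mul, p1_conj, p2_conj, p1_one, p2_one, p1_mk, p2_mk]
  simp [Quaternion.re_mul, Quaternion.imI_mul, Quaternion.imJ_mul, Quaternion.imK_mul]; ring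


/-- `y ↦ conj y * a` as a continuous linear map. -/
def cmr (a : Octonion) : Octonion →L[ℝ] Octonion :=
  LinearMap.toContinuousLinearMap
    { toFun := fun y => conj y * a
      map_add' := fun x y => by
        show conj (x + y) * a = conj x * a + conj y * a
        rw [conj_add, add_mul']
      map_smul' := fun r x => by
        show conj (r • x) * a = r • (conj x * a)
        rw [conj_smul, smul_mul'] }
@[simp] lemma cmr_apply (a y : Octonion) : cmr a y = conj y * a := rfl

lemma unz (a x : Octonion) (h : ‖x‖ * ‖a‖ < 1) :
    (1 : Octonion) - conj x * a ≠ 0 := by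
  intro h0
  have hm : conj x * a = 1 := (sub_eq_zero.mp h0).symm
  have h1 : (inner ℝ x a : ℝ) = 1 := by
    have := reP x a
    rw [hm] at this
    simpa using this.symm
  have h2 : (inner ℝ x a : ℝ) ≤ ‖x‖ * ‖a‖ :=
    le_trans (real_inner_le_norm x a) le_rfl
  linarith

lemma hpd (a x : Octonion)
    (hne : (inner ℝ ((1:Octonion) - conj x * a) ((1:Octonion) - conj x * a) : ℝ) ≠ 0)
    (i : Fin 8) :
    pd i (fun y => (((inner ℝ ((1:Octonion) - conj y * a) ((1:Octonion) - conj y * a) : ℝ))^4)⁻¹ •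
        (y - (inner ℝ y y : ℝ) • a)) x
    = (((inner ℝ ((1:Octonion) - conj x * a) ((1:Octonion) - conj x * a) : ℝ))^4)⁻¹ •
        (e i - ((2:ℝ) * (inner ℝ x (e i) : ℝ)) • a)
      + ((8:ℝ) * ((((inner ℝ ((1:Octonion) - conj x * a) ((1:Octonion) - conj x * a) : ℝ))^5)⁻¹)) •
        ((inner ℝ ((1:Octonion) - conj x * a) (conj (e i) * a) : ℝ) •
          (x - (inner ℝ x x : ℝ) • a)) := by
  have hw : HasFDerivAt (fun y : Octonion => (1:Octonion) - conj y * a) (-(cmr a)) x := by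
    simpa using ((cmr a).hasFDerivAt (x := x)).const_sub 1
  have hQ := hw.inner ℝ hw
  have hg := (hasDerivAt_pow 4
      ((inner ℝ ((1:Octonion) - conj x * a) ((1:Octonion) - conj x * a) : ℝ))).inv
      (pow_ne_zero 4 hne)
  have hs := hg.comp_hasFDerivAt x hQ
  have hid := hasFDerivAt_id (𝕜 := ℝ) x
  have hN := hid.inner ℝ hid
  have hsm := hN.smul (hasFDerivAt_const a x)
  have hh := hid.sub hsm
  have hf : HasFDerivAt (fun y : Octonion =>
      (((inner ℝ ((1:Octonion) - conj y * a) ((1:Octonion) - conj y * a) : ℝ))^4)⁻¹ •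
        (y - (inner ℝ y y : ℝ) • a)) _ x := hs.smul hh
  rw [pd, hf.fderiv]
  simp only [ContinuousLinearMap.add_apply, ContinuousLinearMap.smul_apply,
    ContinuousLinearMap.comp_apply, ContinuousLinearMap.prod_apply,
    ContinuousLinearMap.smulRight_apply, ContinuousLinearMap.neg_apply,
    ContinuousLinearMap.coe_sub', ContinuousLinearMap.coe_smul', Pi.smul_apply, Pi.sub_apply,
    fderivInnerCLM_apply, cmr_apply, ContinuousLinearMap.id_apply,
    ContinuousLinearMap.zero_apply, ContinuousLinearMap.sub_apply, inner_neg_right,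
    inner_neg_left, smul_eq_mul]
  rw [real_inner_comm (conj (e i) * a) ((1:Octonion) - conj x * a),
      real_inner_comm (e i) x]
  set q : ℝ := (inner ℝ ((1:Octonion) - conj x * a) ((1:Octonion) - conj x * a) : ℝ) with hqd
  match_scalars <;>
    (try simp only [Function.comp_apply, Pi.inv_apply, id_eq, Nat.cast_ofNat,
        real_inner_comm (conj (e i) * a), real_inner_comm (e i) x, ← hqd]) <;>
    (try field_simp) <;> (try ring)


end Octonion

open Octonion

/-- `D̄ₓ[(x - a|x|²)/|1 - x̄a|⁸] = [6(1-|a|²|x|²) + 2(1-x̄a)](1-x̄a)/|1-x̄a|¹⁰`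
whenever `|x̄a| = |x||a| < 1`. -/
theorem dbar_bergman_formula (a x : Octonion) (h : ‖x‖ * ‖a‖ < 1) :
    Octonion.Dbar (fun y =>
        (‖(1 : Octonion) - Octonion.conj y * a‖ ^ 8)⁻¹ • (y - (‖y‖ ^ 2) • a)) x =
      (‖(1 : Octonion) - Octonion.conj x * a‖ ^ 10)⁻¹ •
        (((6 * (1 - ‖a‖ ^ 2 * ‖x‖ ^ 2)) • (1 : Octonion) +
            (2 : ℝ) • ((1 : Octonion) - Octonion.conj x * a)) *
          ((1 : Octonion) - Octonion.conj x * a)) := by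
  
  have hu : (1 : Octonion) - conj x * a ≠ 0 := unz a x h
  have hne : (inner ℝ ((1:Octonion) - conj x * a) ((1:Octonion) - conj x * a) : ℝ) ≠ 0 :=
    inner_self_ne_zero.mpr hu
  have hfun : (fun y : Octonion =>
        (‖(1 : Octonion) - Octonion.conj y * a‖ ^ 8)⁻¹ • (y - (‖y‖ ^ 2) • a)) =
      (fun y : Octonion =>
        (((inner ℝ ((1:Octonion) - conj y * a) ((1:Octonion) - conj y * a) : ℝ))^4)⁻¹ •
          (y - (inner ℝ y y : ℝ) • a)) := by
    funext y
    rw [show ‖(1 : Octonion) - Octonion.conj y * a‖ ^ 8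
          = (‖(1 : Octonion) - Octonion.conj y * a‖ ^ 2) ^ 4 by ring,
        ← real_inner_self_eq_norm_sq, ← real_inner_self_eq_norm_sq]
  rw [hfun]
  rw [show ‖(1 : Octonion) - Octonion.conj x * a‖ ^ 10
        = (‖(1 : Octonion) - Octonion.conj x * a‖ ^ 2) ^ 5 by ring,
      ← real_inner_self_eq_norm_sq, ← real_inner_self_eq_norm_sq,
      ← real_inner_self_eq_norm_sq]
  unfold Dbar
  simp only [hpd a x hne]
  simp only [mul_add', mul_smul'']
  rw [Finset.sum_add_distrib, ← Finset.smul_sum, ← Finset.smul_sum, sumA x a,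
      sumB ((1:Octonion) - conj x * a) (x - (inner ℝ x x : ℝ) • a) a]
  rw [sub_mul' (1:Octonion) (conj x * a) (conj a), one_mul', mulC (conj x) a]
  rw [sub_mul' (conj a) _ _, smul_mul']
  rw [mul_sub' (conj a) _ _, mul_smul'' _ (conj a) a, mulE a x, mulD a]
  rw [mul_sub' (conj x) _ _, mul_smul'' _ (conj x) a, mulD x]
  rw [add_mul', smul_mul', smul_mul', one_mul']
  rw [sub_mul' (1:Octonion) (conj x * a) _, one_mul',
      mul_sub' (conj x * a) _ _, mul_one', sqO (conj x * a), reP x a,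
      compI x a]
  rw [qval x a] at hne ⊢
  generalize ht : (inner ℝ x a : ℝ) = t at hne ⊢
  generalize hpx : (inner ℝ x x : ℝ) = px at hne ⊢
  generalize hpa : (inner ℝ a a : ℝ) = pa at hne ⊢
  match_scalars <;> (try field_simp) <;> (try ring)
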